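/- For any quantum POVM M = {M_i} and differentiable family of density matrices ρ(θ), the classical Fisher information of the measurement outcome distribution satisfies J_M(θ) = Σ_i [tr(M_i ρ')]²/tr(M_i ρ) ≤ tr(ρ' L_ρ(ρ')), where L_ρ is the symmetric logarithmic derivative superoperator, i.e., the classical Fisher information of any measurement is bounded by the quantum Fisher information. -/

import Mathlib

open Matrix
open scoped ComplexOrder

/-- Cauchy–Schwarz for the Frobenius inner product (real part version). -/
lemma trace_cauchy_schwarz {n : ℕ} (A B : Matrix (Fin n) (Fin n) ℂ) :
    ((Aᴴ * B).trace.re) ^ 2 ≤ (Aᴴ * A).trace.re * (Bᴴ * B).trace.re := by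
  have hre : ∀ (C D : Matrix (Fin n) (Fin n) ℂ),
      (Cᴴ * D).trace.re = ∑ p : Fin n × Fin n, (star (C p.2 p.1) * D p.2 p.1).re := by
    intro C D
    rw [Fintype.sum_prod_type]
    simp [Matrix.trace, Matrix.mul_apply, Matrix.diag, Matrix.conjTranspose_apply,
      Complex.re_sum]
  rw [hre A B, hre A A, hre B B]
  have hAA : ∀ p : Fin n × Fin n, (star (A p.2 p.1) * A p.2 p.1).re = ‖A p.2 p.1‖ ^ 2 := by
    intro p
    rw [mul_comm, Complex.star_def, Complex.mul_conj]
    simp [Complex.normSq_eq_norm_sq, ← Complex.ofReal_pow]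
  have hBB : ∀ p : Fin n × Fin n, (star (B p.2 p.1) * B p.2 p.1).re = ‖B p.2 p.1‖ ^ 2 := by
    intro p
    rw [mul_comm, Complex.star_def, Complex.mul_conj]
    simp [Complex.normSq_eq_norm_sq, ← Complex.ofReal_pow]
  simp only [hAA, hBB]
  have h1 : |∑ p : Fin n × Fin n, (star (A p.2 p.1) * B p.2 p.1).re|
      ≤ ∑ p : Fin n × Fin n, ‖A p.2 p.1‖ * ‖B p.2 p.1‖ := by
    refine (Finset.abs_sum_le_sum_abs _ _).trans (Finset.sum_le_sum fun p _ => ?_)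
    calc |(star (A p.2 p.1) * B p.2 p.1).re| ≤ ‖star (A p.2 p.1) * B p.2 p.1‖ :=
          Complex.abs_re_le_norm _
      _ = ‖A p.2 p.1‖ * ‖B p.2 p.1‖ := by rw [norm_mul, norm_star]
  calc (∑ p : Fin n × Fin n, (star (A p.2 p.1) * B p.2 p.1).re) ^ 2
      ≤ (∑ p : Fin n × Fin n, ‖A p.2 p.1‖ * ‖B p.2 p.1‖) ^ 2 := by
        rw [← sq_abs]
        exact pow_le_pow_left₀ (abs_nonneg _) h1 2
    _ ≤ (∑ p : Fin n × Fin n, ‖A p.2 p.1‖ ^ 2) * ∑ p : Fin n × Fin n, ‖B p.2 p.1‖ ^ 2 :=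
        Finset.sum_mul_sq_le_sq_mul_sq _ _ _

open scoped MatrixOrder in
lemma exists_herm_sqrt {n : ℕ} (A : Matrix (Fin n) (Fin n) ℂ) (hA : A.PosSemidef) :
    ∃ R : Matrix (Fin n) (Fin n) ℂ, R * R = A ∧ Rᴴ = R := by
  obtain ⟨X, hX, -, hXA⟩ :=
    CFC.exists_sqrt_of_isSelfAdjoint_of_quasispectrumRestricts hA.isHermitian
      (QuasispectrumRestricts.nnreal_of_nonneg hA.nonneg)
  exact ⟨X, by simpa using hXA, hX.star_eq⟩

theorem stmt_4 {n m : ℕ} (ρ ρ' L : Matrix (Fin n) (Fin n) ℂ)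
    (hρ : ρ.PosDef) (hρtr : ρ.trace = 1) (hρ' : ρ'.IsHermitian) (hρ'tr : ρ'.trace = 0)
    (hL : L.IsHermitian) (hSLD : ρ * L + L * ρ = (2 : ℂ) • ρ')
    (M : Fin m → Matrix (Fin n) (Fin n) ℂ)
    (hM : ∀ i, (M i).PosSemidef) (hMsum : ∑ i, M i = 1)
    (hMpos : ∀ i, 0 < ((M i * ρ).trace).re) :
    ∑ i, (((M i * ρ').trace).re) ^ 2 / ((M i * ρ).trace).re ≤ ((ρ' * L).trace).re := by
  obtain ⟨R, hR, hRH⟩ := exists_herm_sqrt ρ hρ.posSemidef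
  -- the right-hand side equals re tr(L ρ L)
  have hrhs : (ρ' * L).trace = (L * (ρ * L)).trace := by
    have h1 : (2 : ℂ) • (ρ' * L) = ρ * L * L + L * ρ * L := by
      rw [← smul_mul_assoc, ← hSLD, add_mul]
    have h2 : ((2 : ℂ) • (ρ' * L)).trace = (ρ * L * L).trace + (L * ρ * L).trace := by
      rw [h1, Matrix.trace_add]
    rw [Matrix.trace_smul, Matrix.trace_mul_cycle ρ L L] at h2
    have : (2 : ℂ) • (ρ' * L).trace = (2 : ℂ) • (L * ρ * L).trace := by
      rw [h2]; rw [smul_eq_mul]; ring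
    have := smul_right_injective ℂ (by norm_num : (2:ℂ) ≠ 0) this
    rw [this, mul_assoc]
  -- per-index bound
  have hkey : ∀ i, (((M i * ρ').trace).re) ^ 2 / ((M i * ρ).trace).re
      ≤ ((M i * (L * (ρ * L))).trace).re := by
    intro i
    obtain ⟨S, hS, hSH⟩ := exists_herm_sqrt (M i) (hM i)
    have hMH : (M i)ᴴ = M i := (hM i).1
    have e1 : ((R * S)ᴴ * (R * S)).trace = (M i * ρ).trace := by
      rw [conjTranspose_mul, hRH, hSH]
      have : S * R * (R * S) = S * (R * R) * S := by noncomm_ring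
      rw [this, Matrix.trace_mul_cycle S (R * R) S, hS, hR]
    have e2 : ((R * S)ᴴ * (R * L * S)).trace = (M i * (ρ * L)).trace := by
      rw [conjTranspose_mul, hRH, hSH]
      have : S * R * (R * L * S) = S * (R * R * L) * S := by noncomm_ring
      rw [this, Matrix.trace_mul_cycle S (R * R * L) S, hS, hR]
    have e3 : ((R * L * S)ᴴ * (R * L * S)).trace = (M i * (L * (ρ * L))).trace := by
      have hH : (R * L * S)ᴴ = S * (L * R) := by
        rw [conjTranspose_mul, conjTranspose_mul, hRH, hSH, hL.eq]
      rw [hH]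
      have : S * (L * R) * (R * L * S) = S * (L * (R * R) * L) * S := by noncomm_ring
      rw [this, Matrix.trace_mul_cycle S (L * (R * R) * L) S, hS, hR, mul_assoc L ρ L]
    -- re tr(M_i ρ') = re tr(M_i ρ L)
    have ere : ((M i * ρ').trace).re = ((M i * (ρ * L)).trace).re := by
      have h1 : (2 : ℂ) • (M i * ρ') = M i * (ρ * L) + M i * (L * ρ) := by
        rw [← mul_smul_comm, ← hSLD, mul_add]
      have hconj : (M i * (L * ρ)).trace = star ((M i * (ρ * L)).trace) := by
        rw [← Matrix.trace_conjTranspose]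
        have : (M i * (ρ * L))ᴴ = L * ρ * M i := by
          rw [conjTranspose_mul, conjTranspose_mul, hMH, hρ.isHermitian.eq, hL.eq]
        rw [this, Matrix.trace_mul_cycle L ρ (M i), mul_assoc]
      have h2 : (2 : ℂ) * (M i * ρ').trace
          = (M i * (ρ * L)).trace + star ((M i * (ρ * L)).trace) := by
        rw [← hconj, ← Matrix.trace_add, ← h1, Matrix.trace_smul, smul_eq_mul]
      have := congrArg Complex.re h2
      simp [Complex.add_re] at this
      linarith
    have cs := trace_cauchy_schwarz (R * S) (R * L * S)
    rw [e1, e2, e3] at cs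
    rw [ere, div_le_iff₀ (hMpos i)]
    calc (((M i * (ρ * L)).trace).re) ^ 2
        ≤ ((M i * ρ).trace).re * ((M i * (L * (ρ * L))).trace).re := cs
      _ = ((M i * (L * (ρ * L))).trace).re * ((M i * ρ).trace).re := by ring
  calc ∑ i, (((M i * ρ').trace).re) ^ 2 / ((M i * ρ).trace).re
      ≤ ∑ i, ((M i * (L * (ρ * L))).trace).re := Finset.sum_le_sum fun i _ => hkey i
    _ = ((L * (ρ * L)).trace).re := by
        rw [← Complex.re_sum, ← Matrix.trace_sum, ← Finset.sum_mul, hMsum, one_mul]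
    _ = ((ρ' * L).trace).re := by rw [hrhs]
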